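/- For every integer d ≥ 1 and every a > 0 one has ∫_ℂ exp(−a|z|² + (i/d)·(z^d + conj(z)^d)) dx dy = π·∫_0^∞ exp(−a·t)·J₀(2·t^{d/2}/d) dt, where J₀(x) = (1/π)·∫_0^π cos(x·sin θ) dθ is the Bessel function of the first kind of order zero. -/

import Mathlib

open MeasureTheory Complex

/-- The Bessel function of the first kind of order zero,
`J₀(x) = (1/π) ∫_0^π cos(x sin θ) dθ`. -/
noncomputable def besselJ0 (x : ℝ) : ℝ :=
  (1 / Real.pi) * ∫ θ in (0 : ℝ)..Real.pi, Real.cos (x * Real.sin θ)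

section Aux
open intervalIntegral Set

lemma sin_part (c : ℝ) :
    ∫ θ in (-Real.pi)..Real.pi, Real.sin (c * Real.cos θ) = 0 := by
  have hc : ∀ a b : ℝ, IntervalIntegrable (fun θ => Real.sin (c * Real.cos θ)) volume a b :=
    fun a b => (Real.continuous_sin.comp (continuous_const.mul Real.continuous_cos)).intervalIntegrable a b
  have h1 : (∫ θ in (-Real.pi)..(0:ℝ), Real.sin (c * Real.cos θ))
      = ∫ θ in (0:ℝ)..Real.pi, Real.sin (c * Real.cos (θ - Real.pi)) := by
    rw [intervalIntegral.integral_comp_sub_right (fun θ => Real.sin (c * Real.cos θ)) Real.pi]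
    norm_num
  have h2 : ∀ θ : ℝ, Real.sin (c * Real.cos (θ - Real.pi)) = -Real.sin (c * Real.cos θ) := by
    intro θ
    rw [show θ - Real.pi = -(Real.pi - θ) by ring, Real.cos_neg, Real.cos_pi_sub, mul_neg,
      Real.sin_neg]
  rw [← intervalIntegral.integral_add_adjacent_intervals (hc (-Real.pi) 0) (hc 0 Real.pi), h1]
  simp_rw [h2]
  rw [intervalIntegral.integral_neg]
  ring

lemma cos_part (c : ℝ) :
    ∫ θ in (-Real.pi)..Real.pi, Real.cos (c * Real.cos θ)
      = 2 * Real.pi * besselJ0 c := by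
  have hc : ∀ a b : ℝ, IntervalIntegrable (fun θ => Real.cos (c * Real.cos θ)) volume a b :=
    fun a b => (Real.continuous_cos.comp (continuous_const.mul Real.continuous_cos)).intervalIntegrable a b
  -- even: ∫_{-π}^0 = ∫_0^π
  have h1 : (∫ θ in (-Real.pi)..(0:ℝ), Real.cos (c * Real.cos θ))
      = ∫ θ in (0:ℝ)..Real.pi, Real.cos (c * Real.cos θ) := by
    rw [show (∫ θ in (0:ℝ)..Real.pi, Real.cos (c * Real.cos θ))
        = ∫ θ in (0:ℝ)..Real.pi, Real.cos (c * Real.cos (-θ)) by simp_rw [Real.cos_neg]]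
    rw [intervalIntegral.integral_comp_neg (fun θ => Real.cos (c * Real.cos θ))]
    norm_num
  -- shift: ∫_0^π cos(c cos θ) = ∫_{-π/2}^{π/2} cos(c sin u)
  have h2 : (∫ θ in (0:ℝ)..Real.pi, Real.cos (c * Real.cos θ))
      = ∫ u in (-(Real.pi/2))..(Real.pi/2), Real.cos (c * Real.sin u) := by
    have := intervalIntegral.integral_comp_add_right (a := -(Real.pi/2)) (b := Real.pi/2)
      (fun θ => Real.cos (c * Real.cos θ)) (Real.pi/2)
    rw [show -(Real.pi/2) + Real.pi/2 = (0:ℝ) by ring, show Real.pi/2 + Real.pi/2 = Real.pi by ring] at this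
    rw [← this]
    congr 1; ext u
    rw [Real.cos_add_pi_div_two, mul_neg, Real.cos_neg]
  -- periodicity π of cos(c sin u): ∫_{-π/2}^{π/2} = ∫_0^π
  have hper : Function.Periodic (fun u => Real.cos (c * Real.sin u)) Real.pi := by
    intro u; simp [Real.sin_add_pi]
  have h3 : (∫ u in (-(Real.pi/2))..(Real.pi/2), Real.cos (c * Real.sin u))
      = ∫ u in (0:ℝ)..Real.pi, Real.cos (c * Real.sin u) := by
    have := hper.intervalIntegral_add_eq (-(Real.pi/2)) 0
    rw [show -(Real.pi/2) + Real.pi = Real.pi/2 by ring, zero_add] at this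
    exact this
  rw [← intervalIntegral.integral_add_adjacent_intervals (hc (-Real.pi) 0) (hc 0 Real.pi),
    h1, h2, h3, besselJ0]
  field_simp
  ring

lemma angular (c : ℝ) :
    ∫ θ in (-Real.pi)..Real.pi, Complex.exp (Complex.I * ((c * Real.cos θ : ℝ) : ℂ))
      = (2 * Real.pi * besselJ0 c : ℝ) := by
  have key : ∀ θ : ℝ, Complex.exp (Complex.I * ((c * Real.cos θ : ℝ) : ℂ))
      = ((Real.cos (c * Real.cos θ) : ℝ) : ℂ) + ((Real.sin (c * Real.cos θ) : ℝ) : ℂ) * Complex.I := by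
    intro θ
    rw [mul_comm, Complex.exp_mul_I, Complex.ofReal_cos, Complex.ofReal_sin]
  simp_rw [key]
  have h1 : IntervalIntegrable (fun θ : ℝ => ((Real.cos (c * Real.cos θ) : ℝ) : ℂ)) volume (-Real.pi) Real.pi := by
    apply Continuous.intervalIntegrable; fun_prop
  have h2 : IntervalIntegrable (fun θ : ℝ => ((Real.sin (c * Real.cos θ) : ℝ) : ℂ) * Complex.I) volume (-Real.pi) Real.pi := by
    apply Continuous.intervalIntegrable; fun_prop
  rw [intervalIntegral.integral_add h1 h2, intervalIntegral.integral_mul_const,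
    intervalIntegral.integral_ofReal, intervalIntegral.integral_ofReal,
    sin_part, cos_part]
  simp

lemma angular_d (c : ℝ) (d : ℕ) (hd : 1 ≤ d) :
    ∫ θ in (-Real.pi)..Real.pi, Complex.exp (Complex.I * ((c * Real.cos (d * θ) : ℝ) : ℂ))
      = ∫ θ in (-Real.pi)..Real.pi, Complex.exp (Complex.I * ((c * Real.cos θ : ℝ) : ℂ)) := by
  set g : ℝ → ℂ := fun u => Complex.exp (Complex.I * ((c * Real.cos u : ℝ) : ℂ)) with hg
  have hgc : Continuous g := by fun_prop
  have hgi : ∀ a b : ℝ, IntervalIntegrable g volume a b := fun a b => hgc.intervalIntegrable a b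
  have hper : Function.Periodic g (2 * Real.pi) := by
    intro u; simp only [hg, Real.cos_add_two_pi]
  have hd0 : (d : ℝ) ≠ 0 := Nat.cast_ne_zero.2 (by omega)
  have h1 : (∫ θ in (-Real.pi)..Real.pi, g ((d:ℝ) * θ))
      = ((d:ℝ))⁻¹ • ∫ u in ((d:ℝ) * -Real.pi)..((d:ℝ) * Real.pi), g u :=
    intervalIntegral.integral_comp_mul_left g hd0
  have h2 : (∫ u in ((d:ℝ) * -Real.pi)..((d:ℝ) * Real.pi), g u)
      = (d : ℤ) • ∫ u in ((d:ℝ) * -Real.pi)..((d:ℝ) * -Real.pi + 2 * Real.pi), g u := by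
    have := hper.intervalIntegral_add_zsmul_eq (d : ℤ) ((d:ℝ) * -Real.pi) hgi
    rw [zsmul_eq_mul] at this
    rw [show ((d:ℝ) * -Real.pi + ((d:ℤ):ℝ) * (2 * Real.pi)) = (d:ℝ) * Real.pi by
      push_cast; ring] at this
    exact this
  have h3 : (∫ u in ((d:ℝ) * -Real.pi)..((d:ℝ) * -Real.pi + 2 * Real.pi), g u)
      = ∫ u in (-Real.pi)..Real.pi, g u := by
    have := hper.intervalIntegral_add_eq ((d:ℝ) * -Real.pi) (-Real.pi)
    rw [show -Real.pi + 2 * Real.pi = Real.pi by ring] at this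
    exact this
  calc ∫ θ in (-Real.pi)..Real.pi, g ((d:ℝ) * θ)
      = ((d:ℝ))⁻¹ • ((d : ℤ) • ∫ u in (-Real.pi)..Real.pi, g u) := by rw [h1, h2, h3]
    _ = ∫ u in (-Real.pi)..Real.pi, g u := by
        rw [zsmul_eq_mul, Complex.real_smul]
        have h : (d:ℂ) ≠ 0 := Nat.cast_ne_zero.2 (by omega)
        push_cast
        exact inv_mul_cancel_left₀ h _

lemma radial (d : ℕ) (a : ℝ) :
    ∫ r in Ioi (0:ℝ), r * Real.exp (-a * r^2) * (2 * Real.pi * besselJ0 (2 * r^d / d))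
      = Real.pi * ∫ t in Ioi (0:ℝ), Real.exp (-a*t) * besselJ0 (2 * t^((d:ℝ)/2)/d) := by
  set g : ℝ → ℝ := fun t => Real.exp (-a*t) * besselJ0 (2 * t^((d:ℝ)/2)/d) with hg
  have key := integral_comp_rpow_Ioi g (p := 2) two_ne_zero
  calc ∫ r in Ioi (0:ℝ), r * Real.exp (-a * r^2) * (2 * Real.pi * besselJ0 (2 * r^d / d))
      = ∫ x in Ioi (0:ℝ), Real.pi * ((|(2:ℝ)| * x^((2:ℝ)-1)) • g (x^(2:ℝ))) := by
        apply setIntegral_congr_fun measurableSet_Ioi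
        intro x hx
        have hx0 : (0:ℝ) < x := hx
        have e1 : x^((2:ℝ)-1) = x := by norm_num
        have e2 : x^(2:ℝ) = x^2 := by
          rw [show (2:ℝ) = ((2:ℕ):ℝ) by norm_num, Real.rpow_natCast]
        have e3 : ((x^2 : ℝ))^((d:ℝ)/2) = x^d := by
          rw [show ((x^2 : ℝ)) = x^((2:ℕ):ℝ) by rw [Real.rpow_natCast],
            ← Real.rpow_mul hx0.le, show (((2:ℕ):ℝ))*((d:ℝ)/2) = ((d:ℕ):ℝ) by push_cast; ring,
            Real.rpow_natCast]
        simp only [hg, smul_eq_mul, e1, e2, e3, _root_.abs_two]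
        ring
    _ = Real.pi * ∫ x in Ioi (0:ℝ), (|(2:ℝ)| * x^((2:ℝ)-1)) • g (x^(2:ℝ)) :=
        integral_const_mul _ _
    _ = Real.pi * ∫ t in Ioi (0:ℝ), g t := by rw [key]

lemma pointwise_polar (d : ℕ) (hd : 1 ≤ d) (a r θ : ℝ) (hr : 0 < r) :
    Complex.exp (-(a : ℂ) * (‖Complex.polarCoord.symm (r, θ)‖ : ℂ) ^ 2 +
        (Complex.I / (d : ℂ)) * ((Complex.polarCoord.symm (r, θ)) ^ d +
          (starRingEnd ℂ) (Complex.polarCoord.symm (r, θ)) ^ d))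
      = ((Real.exp (-a * r ^ 2) : ℝ) : ℂ) *
          Complex.exp (Complex.I * ((2 * r ^ d / d * Real.cos (d * θ) : ℝ) : ℂ)) := by
  set z := Complex.polarCoord.symm (r, θ) with hzdef
  have hz : z = ((r : ℝ) : ℂ) * Complex.exp ((θ : ℂ) * Complex.I) := by
    rw [hzdef, Complex.polarCoord_symm_apply, Complex.exp_mul_I, Complex.ofReal_cos,
      Complex.ofReal_sin]
  have habs : (‖z‖ : ℝ) = r := by
    rw [hzdef, Complex.norm_polarCoord_symm, abs_of_pos hr]
  have hzd : z ^ d = ((r ^ d : ℝ) : ℂ) * Complex.exp (((d * θ : ℝ) : ℂ) * Complex.I) := by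
    rw [hz, mul_pow, ← Complex.exp_nat_mul]
    push_cast
    ring_nf
  have hsum : z ^ d + (starRingEnd ℂ) z ^ d
      = ((2 * (r ^ d * Real.cos (d * θ)) : ℝ) : ℂ) := by
    rw [← map_pow, Complex.add_conj, hzd]
    congr 1
    rw [Complex.mul_re, Complex.ofReal_re, Complex.ofReal_im, Complex.exp_ofReal_mul_I_re]
    ring
  rw [habs, hsum, Complex.ofReal_exp, ← Complex.exp_add]
  congr 1
  have hd0 : (d : ℂ) ≠ 0 := Nat.cast_ne_zero.2 (by omega)
  push_cast
  field_simp

end Aux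

theorem stmt_18 (d : ℕ) (hd : 1 ≤ d) (a : ℝ) (ha : 0 < a) :
    ∫ z : ℂ, Complex.exp (-(a : ℂ) * (‖z‖ : ℂ) ^ 2 +
        (Complex.I / (d : ℂ)) * (z ^ d + (starRingEnd ℂ) z ^ d)) =
      (Real.pi : ℂ) * ∫ t in Set.Ioi (0 : ℝ),
        ((Real.exp (-a * t) * besselJ0 (2 * t ^ ((d : ℝ) / 2) / d) : ℝ) : ℂ) := by
  rw [← Complex.integral_comp_polarCoord_symm, polarCoord_target]
  set F : ℝ × ℝ → ℂ := fun p =>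
    Complex.exp (Complex.I * ((2 * p.1 ^ d / d * Real.cos (d * p.2) : ℝ) : ℂ)) *
      ((p.1 * Real.exp (-a * p.1 ^ 2) : ℝ) : ℂ) with hF
  have hS : MeasurableSet (Set.Ioi (0:ℝ) ×ˢ Set.Ioo (-Real.pi) Real.pi) :=
    measurableSet_Ioi.prod measurableSet_Ioo
  have step1 : (∫ p in Set.Ioi (0:ℝ) ×ˢ Set.Ioo (-Real.pi) Real.pi,
      p.1 • Complex.exp (-(a : ℂ) * (‖Complex.polarCoord.symm p‖ : ℂ) ^ 2 +
        (Complex.I / (d : ℂ)) * ((Complex.polarCoord.symm p) ^ d +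
          (starRingEnd ℂ) (Complex.polarCoord.symm p) ^ d)))
      = ∫ p in Set.Ioi (0:ℝ) ×ˢ Set.Ioo (-Real.pi) Real.pi, F p := by
    apply setIntegral_congr_fun hS
    intro p hp
    obtain ⟨r, θ⟩ := p
    have hp1 : 0 < r := hp.1
    simp only [hF]
    rw [pointwise_polar d hd a r θ hp1, Complex.real_smul]
    push_cast
    ring
  rw [step1]
  -- integrability
  have hf₁ : IntegrableOn (fun r : ℝ => ((r * Real.exp (-a * r ^ 2) : ℝ) : ℂ)) (Set.Ioi 0) := by
    have h := integrableOn_rpow_mul_exp_neg_mul_sq ha (s := 1) (by norm_num)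
    simp only [Real.rpow_one] at h
    exact h.ofReal
  have hg₁ : IntegrableOn (fun _ : ℝ => (1:ℂ)) (Set.Ioo (-Real.pi) Real.pi) :=
    integrableOn_const measure_Ioo_lt_top.ne
  have hprod : Integrable (fun p : ℝ × ℝ => ((p.1 * Real.exp (-a * p.1 ^ 2) : ℝ) : ℂ))
      (((volume : Measure ℝ).restrict (Set.Ioi 0)).prod
        ((volume : Measure ℝ).restrict (Set.Ioo (-Real.pi) Real.pi))) := by
    have := hf₁.mul_prod hg₁
    simpa using this
  have hFint : IntegrableOn F (Set.Ioi (0:ℝ) ×ˢ Set.Ioo (-Real.pi) Real.pi)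
      ((volume : Measure ℝ).prod (volume : Measure ℝ)) := by
    rw [IntegrableOn, ← Measure.prod_restrict]
    apply Integrable.bdd_mul (c := 1) hprod
    · apply Continuous.aestronglyMeasurable
      fun_prop
    · refine Filter.Eventually.of_forall (fun p => ?_)
      rw [Complex.norm_exp,
        show (Complex.I * ((2 * p.1 ^ d / d * Real.cos (d * p.2) : ℝ) : ℂ)).re = 0 by
          rw [Complex.mul_re, Complex.I_re, Complex.I_im, Complex.ofReal_re, Complex.ofReal_im]
          ring]
      simp
  rw [MeasureTheory.Measure.volume_eq_prod, setIntegral_prod F hFint]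
  -- inner integral
  have step4 : ∀ r ∈ Set.Ioi (0:ℝ),
      (∫ θ in Set.Ioo (-Real.pi) Real.pi, F (r, θ))
        = ((2 * Real.pi * besselJ0 (2 * r ^ d / d) : ℝ) : ℂ) *
            ((r * Real.exp (-a * r ^ 2) : ℝ) : ℂ) := by
    intro r _
    rw [← MeasureTheory.integral_Ioc_eq_integral_Ioo,
      ← intervalIntegral.integral_of_le (by linarith [Real.pi_pos] : -Real.pi ≤ Real.pi)]
    simp only [hF]
    rw [intervalIntegral.integral_mul_const, angular_d (2 * r ^ d / d) d hd,
      angular (2 * r ^ d / d)]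
  rw [setIntegral_congr_fun measurableSet_Ioi step4]
  -- radial part
  have step5 : (∫ r in Set.Ioi (0:ℝ),
      ((2 * Real.pi * besselJ0 (2 * r ^ d / d) : ℝ) : ℂ) * ((r * Real.exp (-a * r ^ 2) : ℝ) : ℂ))
      = ((∫ r in Set.Ioi (0:ℝ), r * Real.exp (-a * r ^ 2) *
          (2 * Real.pi * besselJ0 (2 * r ^ d / d)) : ℝ) : ℂ) := by
    have e1 : (∫ r in Set.Ioi (0:ℝ),
        ((2 * Real.pi * besselJ0 (2 * r ^ d / d) : ℝ) : ℂ) * ((r * Real.exp (-a * r ^ 2) : ℝ) : ℂ))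
        = ∫ r in Set.Ioi (0:ℝ),
          ((r * Real.exp (-a * r ^ 2) * (2 * Real.pi * besselJ0 (2 * r ^ d / d)) : ℝ) : ℂ) := by
      apply setIntegral_congr_fun measurableSet_Ioi
      intro r _
      push_cast
      ring
    rw [e1]
    exact integral_ofReal
  rw [step5, radial d a]
  rw [show (∫ t in Set.Ioi (0:ℝ),
      ((Real.exp (-a * t) * besselJ0 (2 * t ^ ((d : ℝ) / 2) / d) : ℝ) : ℂ))
      = ((∫ t in Set.Ioi (0:ℝ),
          Real.exp (-a * t) * besselJ0 (2 * t ^ ((d : ℝ) / 2) / d) : ℝ) : ℂ) from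
    integral_ofReal]
  push_cast
  ring
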